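/- For every n ≥ 0, the total number of oscillating tableaux of length n and arbitrary shape, Σ_μ f̃^μ_n (sum over all integer partitions μ), equals n! times the coefficient of t^n in exp(t + t²). -/

import Mathlib

open scoped BigOperators

/-- A function `ℕ → ℕ` represents an integer partition if it is weakly decreasing and
eventually zero (the value at `i` is the length of row `i` of the Young diagram). -/
def IsPartFun (f : ℕ → ℕ) : Prop :=
  (∀ i j : ℕ, i ≤ j → f j ≤ f i) ∧ ∃ N, ∀ i, N ≤ i → f i = 0

/-- The Young diagram of `g` is obtained from that of `f` by adding exactly one square. -/
def AddBox (f g : ℕ → ℕ) : Prop :=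
  ∃ i, g = Function.update f i (f i + 1)

/-- `T` is an oscillating tableau of length `n`: a sequence `∅ = μ⁰, μ¹, …, μⁿ` of
partitions in which consecutive diagrams differ by adding or removing one square. -/
def IsOscTab (n : ℕ) (T : Fin (n + 1) → ℕ → ℕ) : Prop :=
  (∀ k, IsPartFun (T k)) ∧ T 0 = (fun _ => 0) ∧
    ∀ k : Fin n, AddBox (T k.castSucc) (T k.succ) ∨ AddBox (T k.succ) (T k.castSucc)

namespace Osc

noncomputable section

def up (f : ℕ → ℕ) (i : ℕ) : ℕ → ℕ := Function.update f i (f i + 1)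
def dn (f : ℕ → ℕ) (i : ℕ) : ℕ → ℕ := Function.update f i (f i - 1)
def Addable (f : ℕ → ℕ) (i : ℕ) : Prop := i = 0 ∨ f i < f (i - 1)
def Removable (f : ℕ → ℕ) (i : ℕ) : Prop := f (i + 1) < f i

@[simp] lemma up_same (f : ℕ → ℕ) (i : ℕ) : up f i i = f i + 1 := Function.update_self ..
lemma up_ne (f : ℕ → ℕ) {i j : ℕ} (h : j ≠ i) : up f i j = f j := Function.update_of_ne h _ _
@[simp] lemma dn_same (f : ℕ → ℕ) (i : ℕ) : dn f i i = f i - 1 := Function.update_self ..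
lemma dn_ne (f : ℕ → ℕ) {i j : ℕ} (h : j ≠ i) : dn f i j = f j := Function.update_of_ne h _ _

lemma addable_succ_iff (f : ℕ → ℕ) (i : ℕ) : Addable f (i+1) ↔ Removable f i := by
  unfold Addable Removable; simp

@[simp] lemma addable_zero (f : ℕ → ℕ) : Addable f 0 := Or.inl rfl

lemma Removable.pos {f : ℕ → ℕ} {i : ℕ} (h : Removable f i) : 0 < f i :=
  lt_of_le_of_lt (Nat.zero_le _) h

lemma dn_up (f : ℕ → ℕ) (i : ℕ) : dn (up f i) i = f := by
  funext j
  rcases eq_or_ne j i with rfl | h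
  · simp
  · rw [dn_ne _ h, up_ne _ h]

lemma up_dn {f : ℕ → ℕ} {i : ℕ} (h : 0 < f i) : up (dn f i) i = f := by
  funext j
  rcases eq_or_ne j i with rfl | h'
  · simp [Nat.sub_add_cancel h]
  · rw [up_ne _ h', dn_ne _ h']

lemma up_eq_up_iff {f : ℕ → ℕ} {i j : ℕ} (h : up f i = up f j) : i = j := by
  by_contra hne
  have h1 := congrFun h i
  rw [up_same, up_ne f hne] at h1
  omega

lemma removable_up {f : ℕ → ℕ} (hf : ∀ i j : ℕ, i ≤ j → f j ≤ f i) (i : ℕ) :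
    Removable (up f i) i := by
  unfold Removable
  rw [up_same, up_ne f (by omega : i + 1 ≠ i)]
  have := hf i (i+1) (by omega)
  omega

lemma addable_dn {f : ℕ → ℕ} (hf : ∀ i j : ℕ, i ≤ j → f j ≤ f i) {i : ℕ}
    (hr : Removable f i) : Addable (dn f i) i := by
  rcases Nat.eq_zero_or_pos i with rfl | hi
  · exact Or.inl rfl
  · refine Or.inr ?_
    rw [dn_same, dn_ne f (by omega : i - 1 ≠ i)]
    have h1 := hf (i-1) i (by omega)
    have := hr.pos
    omega

lemma pf_up {f : ℕ → ℕ} (hf : IsPartFun f) {i : ℕ} (hi : Addable f i) : IsPartFun (up f i) := by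
  obtain ⟨hmono, N, hN⟩ := hf
  refine ⟨fun a b hab => ?_, max N (i+1), fun j hj => ?_⟩
  · rcases eq_or_ne i b with rfl | hb
    · rcases eq_or_ne a i with ha | ha
      · subst ha; exact le_refl _
      · rw [up_same, up_ne f ha]
        rcases hi with rfl | hlt
        · omega
        · have : f i < f a := lt_of_lt_of_le hlt (hmono a (i-1) (by omega))
          omega
    · rw [up_ne f (Ne.symm hb)]
      rcases eq_or_ne a i with ha | ha
      · subst ha; rw [up_same]; exact le_trans (hmono a b hab) (by omega)
      · rw [up_ne f ha]; exact hmono a b hab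
  · rw [up_ne f (by omega : j ≠ i)]; exact hN j (by omega)

lemma pf_dn {f : ℕ → ℕ} (hf : IsPartFun f) {i : ℕ} (hr : Removable f i) : IsPartFun (dn f i) := by
  obtain ⟨hmono, N, hN⟩ := hf
  refine ⟨fun a b hab => ?_, N, fun j hj => ?_⟩
  · rcases eq_or_ne i b with rfl | hb
    · rcases eq_or_ne a i with ha | ha
      · subst ha; exact le_refl _
      · rw [dn_same, dn_ne f ha]
        exact le_trans (Nat.sub_le _ _) (hmono a i hab)
    · rw [dn_ne f (Ne.symm hb)]
      rcases eq_or_ne a i with ha | ha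
      · subst ha
        rw [dn_same]
        have h2 : a + 1 ≤ b := by omega
        have := hmono (a+1) b h2
        unfold Removable at hr
        omega
      · rw [dn_ne f ha]; exact hmono a b hab
  · rcases eq_or_ne j i with rfl | hj'
    · rw [dn_same, hN j hj]
    · rw [dn_ne f hj']; exact hN j hj

/-- not-addable means up is not a partition -/
lemma addable_of_pf_up {f : ℕ → ℕ} (hf : IsPartFun f) {i : ℕ} (h : IsPartFun (up f i)) :
    Addable f i := by
  by_contra hna
  unfold Addable at hna
  push_neg at hna
  obtain ⟨hi0, hge⟩ := hna
  have h1 := h.1 (i-1) i (by omega)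
  rw [up_same, up_ne (f := f) (by omega : i - 1 ≠ i)] at h1
  have := hf.1 i (i) (le_refl _)
  omega

lemma removable_of_pf_dn {f : ℕ → ℕ} (hf : IsPartFun f) {i : ℕ} (hpos : 0 < f i)
    (h : IsPartFun (dn f i)) : Removable f i := by
  have h1 := h.1 i (i+1) (by omega)
  rw [dn_same, dn_ne (f := f) (by omega : i + 1 ≠ i)] at h1
  unfold Removable
  omega

/-- characterization of a (partition-preserving) upward step -/
lemma addBox_up_iff {f g : ℕ → ℕ} (hf : IsPartFun f) :
    (AddBox f g ∧ IsPartFun g) ↔ ∃ i, Addable f i ∧ g = up f i := by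
  constructor
  · rintro ⟨⟨i, rfl⟩, hg⟩
    exact ⟨i, addable_of_pf_up hf hg, rfl⟩
  · rintro ⟨i, hi, rfl⟩
    exact ⟨⟨i, rfl⟩, pf_up hf hi⟩

/-- characterization of a (partition-preserving) downward step -/
lemma addBox_dn_iff {f g : ℕ → ℕ} (hf : IsPartFun f) :
    (AddBox g f ∧ IsPartFun g) ↔ ∃ i, Removable f i ∧ g = dn f i := by
  constructor
  · rintro ⟨⟨i, hgf⟩, hg⟩
    have hfi : f i = g i + 1 := by rw [hgf]; simp [up_same]
    have hg_eq : g = dn f i := by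
      funext j
      rcases eq_or_ne j i with rfl | hj
      · rw [dn_same, hfi]; omega
      · rw [dn_ne _ hj, hgf]; exact (Function.update_of_ne hj _ _).symm
    refine ⟨i, ?_, hg_eq⟩
    exact removable_of_pf_dn hf (by omega) (hg_eq ▸ hg)
  · rintro ⟨i, hr, rfl⟩
    refine ⟨⟨i, ?_⟩, pf_dn hf hr⟩
    show f = up (dn f i) i
    exact (up_dn hr.pos).symm

lemma dn_eq_dn_iff {f : ℕ → ℕ} {i j : ℕ} (hi : Removable f i) (hj : Removable f j)
    (h : dn f i = dn f j) : i = j := by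
  by_contra hne
  have h1 := congrFun h i
  rw [dn_same, dn_ne f hne] at h1
  have := hi.pos
  omega

-- ## Stage 2: local differential-poset structure

lemma up_apply (f : ℕ → ℕ) (i j : ℕ) : up f i j = if j = i then f i + 1 else f j :=
  Function.update_apply f i _ j

lemma dn_apply (f : ℕ → ℕ) (i j : ℕ) : dn f i j = if j = i then f i - 1 else f j :=
  Function.update_apply f i _ j

lemma dn_up_comm (l : ℕ → ℕ) {i j : ℕ} (hij : i ≠ j) : dn (up l i) j = up (dn l j) i := by
  funext k
  simp only [up_apply, dn_apply]
  split_ifs <;> omega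

/-- transfer: add then remove (at distinct spots) becomes remove then add -/
lemma swap_ur {l : ℕ → ℕ} (hl : IsPartFun l) {i j : ℕ} (hij : i ≠ j)
    (h1 : Addable l i) (h2 : Removable (up l i) j) :
    Removable l j ∧ Addable (dn l j) i := by
  have m1 := hl.1 j (j+1) (by omega)
  have m2 : i ≠ 0 → l i ≤ l (i-1) := fun _ => hl.1 (i-1) i (by omega)
  have e1 : j + 1 = i → l (j+1) = l i := fun h => by rw [h]
  have e2 : i - 1 = j → l (i-1) = l j := fun h => by rw [h]
  have e3 : j = i → l j = l i := fun h => by rw [h]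
  have e4 : i = j → l i = l j := fun h => by rw [h]
  unfold Removable Addable at *
  simp only [up_apply, dn_apply] at h1 h2 ⊢
  split_ifs at * <;> omega

/-- transfer: remove then add becomes add then remove -/
lemma swap_ru {l : ℕ → ℕ} (hl : IsPartFun l) {i j : ℕ} (hij : i ≠ j)
    (h1 : Removable l j) (h2 : Addable (dn l j) i) :
    Addable l i ∧ Removable (up l i) j := by
  have m1 := hl.1 j (j+1) (by omega)
  have m2 : i ≠ 0 → l i ≤ l (i-1) := fun _ => hl.1 (i-1) i (by omega)
  have e1 : j + 1 = i → l (j+1) = l i := fun h => by rw [h]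
  have e2 : i - 1 = j → l (i-1) = l j := fun h => by rw [h]
  have e3 : j = i → l j = l i := fun h => by rw [h]
  have e4 : i = j → l i = l j := fun h => by rw [h]
  unfold Removable Addable at *
  simp only [up_apply, dn_apply] at h1 h2 ⊢
  split_ifs at * <;> omega

/-- pairs (add-step, remove-step) landing at `ν` -/
def UU (l ν : ℕ → ℕ) : Type :=
  {p : ℕ × ℕ // Addable l p.1 ∧ Removable (up l p.1) p.2 ∧ dn (up l p.1) p.2 = ν}

/-- pairs (remove-step, add-step) landing at `ν` -/
def DD (l ν : ℕ → ℕ) : Type :=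
  {p : ℕ × ℕ // Removable l p.1 ∧ Addable (dn l p.1) p.2 ∧ up (dn l p.1) p.2 = ν}

/-- the differential-poset relation `DU = UD + 1`, fibered over the target shape `ν`. -/
def dp {l : ℕ → ℕ} (hl : IsPartFun l) (ν : ℕ → ℕ) :
    UU l ν ≃ DD l ν ⊕ PLift (l = ν) where
  toFun x :=
    if hij : x.1.1 = x.1.2 then
      (if hi0 : x.1.1 = 0 then
        Sum.inr ⟨by rw [← x.2.2.2, ← hij, dn_up]⟩
      else
        Sum.inl ⟨(x.1.1 - 1, x.1.1 - 1), by
          have hrem : Removable l (x.1.1 - 1) := by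
            rcases x.2.1 with h1 | h1
            · exact absurd h1 hi0
            · unfold Removable
              rw [Nat.sub_add_cancel (by omega)]
              exact h1
          exact ⟨hrem, addable_dn hl.1 hrem, by
            rw [up_dn hrem.pos, ← x.2.2.2, ← hij, dn_up]⟩⟩)
    else
      Sum.inl ⟨(x.1.2, x.1.1), by
        obtain ⟨hr, ha⟩ := swap_ur hl hij x.2.1 x.2.2.1
        exact ⟨hr, ha, by rw [← dn_up_comm _ hij, x.2.2.2]⟩⟩
  invFun y :=
    match y with
    | Sum.inr h =>
        ⟨(0, 0), Or.inl rfl, removable_up hl.1 0, by rw [dn_up]; exact h.down⟩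
    | Sum.inl z =>
        if hd : z.1.1 = z.1.2 then
          ⟨(z.1.1 + 1, z.1.1 + 1), by
            refine ⟨(addable_succ_iff l z.1.1).2 z.2.1, removable_up hl.1 _, ?_⟩
            rw [dn_up, ← z.2.2.2, ← hd, up_dn z.2.1.pos]⟩
        else
          ⟨(z.1.2, z.1.1), by
            obtain ⟨ha, hr⟩ := swap_ru hl (Ne.symm hd) z.2.1 z.2.2.1
            exact ⟨ha, hr, by rw [dn_up_comm _ (Ne.symm hd), z.2.2.2]⟩⟩
  left_inv := by
    rintro ⟨⟨i, j⟩, hx⟩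
    by_cases hij : i = j
    · subst hij
      by_cases hi0 : i = 0
      · subst hi0
        dsimp only
        rw [dif_pos rfl, dif_pos rfl]
      · dsimp only
        rw [dif_pos rfl, dif_neg hi0]
        dsimp only
        simp only [↓reduceDIte]
        exact Subtype.ext (by simp only [Prod.mk.injEq]; omega)
    · dsimp only
      rw [dif_neg hij]
      dsimp only
      simp only [Ne.symm hij, ↓reduceDIte]
      rfl
  right_inv := by
    rintro (⟨⟨j, i⟩, hz⟩ | h)
    · by_cases hd : j = i
      · subst hd
        dsimp only
        simp only [↓reduceDIte, Nat.succ_ne_zero j]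
        exact congrArg Sum.inl (Subtype.ext (by simp only [Prod.mk.injEq]; omega))
      · dsimp only
        simp only [hd, Ne.symm hd, ↓reduceDIte]
    · dsimp only
      rw [dif_pos rfl, dif_pos rfl]

/-- addable corners = removable corners + 1 -/
def addableEquiv {l : ℕ → ℕ} : {i // Addable l i} ≃ Option {i // Removable l i} where
  toFun x :=
    match x with
    | ⟨0, _⟩ => none
    | ⟨i+1, h⟩ => some ⟨i, (addable_succ_iff l i).1 h⟩
  invFun y :=
    match y with
    | none => ⟨0, Or.inl rfl⟩
    | some ⟨i, h⟩ => ⟨i+1, (addable_succ_iff l i).2 h⟩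
  left_inv x := by
    match x with
    | ⟨0, h⟩ => rfl
    | ⟨i+1, h⟩ => rfl
  right_inv y := by
    match y with
    | none => rfl
    | some ⟨i, h⟩ => rfl

lemma finite_addable {l : ℕ → ℕ} (hl : IsPartFun l) : Finite {i // Addable l i} := by
  obtain ⟨N, hN⟩ := hl.2
  have hsub : {i | Addable l i} ⊆ Set.Iic N := by
    intro i hi
    rcases hi with rfl | hi
    · exact Nat.zero_le N
    · by_contra hgt
      simp only [Set.mem_Iic, not_le] at hgt
      rw [hN i (by omega), hN (i-1) (by omega)] at hi
      omega
  exact ((Set.finite_Iic N).subset hsub).to_subtype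

lemma finite_removable {l : ℕ → ℕ} (hl : IsPartFun l) : Finite {i // Removable l i} := by
  obtain ⟨N, hN⟩ := hl.2
  have hsub : {i | Removable l i} ⊆ Set.Iic N := by
    intro i hi
    by_contra hgt
    simp only [Set.mem_Iic, not_le] at hgt
    have hp := hi.pos
    rw [hN i (by omega)] at hp
    omega
  exact ((Set.finite_Iic N).subset hsub).to_subtype

-- ## Stage 3: oscillating tableaux, last-step decomposition

def OT (n : ℕ) : Type := {T : Fin (n+1) → ℕ → ℕ // IsOscTab n T}

def endT {n : ℕ} (T : OT n) : ℕ → ℕ := T.1 (Fin.last n)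

lemma pf_endT {n : ℕ} (T : OT n) : IsPartFun (endT T) := T.2.1 _

/-- marked tableaux: a tableau with an addable corner of its final shape -/
def AddG (n : ℕ) : Type := {p : OT n × ℕ // Addable (endT p.1) p.2}
/-- marked tableaux: a tableau with a removable corner of its final shape -/
def RemG (n : ℕ) : Type := {p : OT n × ℕ // Removable (endT p.1) p.2}

lemma isOscTab_snoc {n : ℕ} (T' : OT n) (g : ℕ → ℕ) (hg : IsPartFun g)
    (hstep : AddBox (endT T') g ∨ AddBox g (endT T')) :
    IsOscTab (n+1) (Fin.snoc T'.1 g) := by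
  obtain ⟨hpf, h0, hsteps⟩ := T'.2
  refine ⟨?_, ?_, ?_⟩
  · intro k
    refine Fin.lastCases ?_ ?_ k
    · rw [Fin.snoc_last]; exact hg
    · intro j; rw [Fin.snoc_castSucc]; exact hpf j
  · have : (0 : Fin (n+2)) = Fin.castSucc 0 := rfl
    rw [this, Fin.snoc_castSucc]
    exact h0
  · intro k
    refine Fin.lastCases ?_ ?_ k
    · rw [Fin.succ_last, Fin.snoc_last, Fin.snoc_castSucc]
      exact hstep
    · intro j
      rw [Fin.succ_castSucc, Fin.snoc_castSucc, Fin.snoc_castSucc]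
      exact hsteps j

lemma isOscTab_init {n : ℕ} (T : OT (n+1)) : IsOscTab n (Fin.init T.1) := by
  obtain ⟨hpf, h0, hsteps⟩ := T.2
  refine ⟨fun k => hpf _, ?_, ?_⟩
  · show T.1 ((0 : Fin (n+1)).castSucc) = _
    rw [Fin.castSucc_zero]
    exact h0
  · intro j
    show (AddBox (T.1 ((j.castSucc).castSucc)) (T.1 ((j.succ).castSucc))) ∨ _
    rw [← Fin.succ_castSucc]
    exact hsteps j.castSucc

/-- the step relation at the very end of a tableau -/
lemma last_step {n : ℕ} (T : OT (n+1)) :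
    AddBox (Fin.init T.1 (Fin.last n)) (endT T) ∨ AddBox (endT T) (Fin.init T.1 (Fin.last n)) := by
  have := T.2.2.2 (Fin.last n)
  rw [Fin.succ_last] at this
  exact this

/-- extension of a tableau by one added box -/
noncomputable def extA (n : ℕ) (x : AddG n) : OT (n+1) :=
  ⟨Fin.snoc x.1.1.1 (up (endT x.1.1) x.1.2),
      isOscTab_snoc x.1.1 _ (pf_up (pf_endT x.1.1) x.2) (Or.inl ⟨x.1.2, rfl⟩)⟩

/-- extension of a tableau by one removed box -/
noncomputable def extR (n : ℕ) (x : RemG n) : OT (n+1) :=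
  ⟨Fin.snoc x.1.1.1 (dn (endT x.1.1) x.1.2),
      isOscTab_snoc x.1.1 _ (pf_dn (pf_endT x.1.1) x.2)
        (Or.inr (((addBox_dn_iff (pf_endT x.1.1)).2 ⟨x.1.2, x.2, rfl⟩).1))⟩

/-- extension of a tableau by one step -/
noncomputable def ext (n : ℕ) : AddG n ⊕ RemG n → OT (n+1) := Sum.elim (extA n) (extR n)

lemma endT_ext_inl {n : ℕ} (x : AddG n) : endT (ext n (Sum.inl x)) = up (endT x.1.1) x.1.2 := by
  show (extA n x).1 (Fin.last (n+1)) = up (endT x.1.1) x.1.2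
  unfold extA
  simp only []
  exact Fin.snoc_last _ _

lemma endT_ext_inr {n : ℕ} (x : RemG n) : endT (ext n (Sum.inr x)) = dn (endT x.1.1) x.1.2 := by
  show (extR n x).1 (Fin.last (n+1)) = dn (endT x.1.1) x.1.2
  unfold extR
  simp only []
  exact Fin.snoc_last _ _

lemma init_ext_inl {n : ℕ} (x : AddG n) : Fin.init (ext n (Sum.inl x)).1 = x.1.1.1 := by
  show Fin.init (extA n x).1 = x.1.1.1
  unfold extA
  simp only []
  exact Fin.init_snoc _ _

lemma init_ext_inr {n : ℕ} (x : RemG n) : Fin.init (ext n (Sum.inr x)).1 = x.1.1.1 := by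
  show Fin.init (extR n x).1 = x.1.1.1
  unfold extR
  simp only []
  exact Fin.init_snoc _ _

lemma up_ne_dn {f g : ℕ → ℕ} (hf : IsPartFun f) {i j : ℕ} : up f i ≠ dn g j ∨ f ≠ g := by
  by_cases hfg : f = g
  · subst hfg
    refine Or.inl fun h => ?_
    have h1 := congrFun h i
    rcases eq_or_ne i j with rfl | hij
    · rw [up_same, dn_same] at h1; omega
    · rw [up_same, dn_ne _ hij] at h1; omega
  · exact Or.inr hfg

lemma ext_bijective (n : ℕ) : Function.Bijective (ext n) := by
  constructor
  · rintro (x | x) (y | y) hxy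
    · have hinit := congrArg Fin.init (congrArg Subtype.val hxy)
      rw [init_ext_inl x, init_ext_inl y] at hinit
      have hT : x.1.1 = y.1.1 := Subtype.ext hinit
      have hlast := congrArg endT hxy
      rw [endT_ext_inl, endT_ext_inl, hT] at hlast
      have : x.1.2 = y.1.2 := up_eq_up_iff hlast
      congr 1
      exact Subtype.ext (Prod.ext (by rw [hT]) this)
    · -- impossible mixed case
      exfalso
      have hinit := congrArg Fin.init (congrArg Subtype.val hxy)
      rw [init_ext_inl x, init_ext_inr y] at hinit
      have hT : x.1.1 = y.1.1 := Subtype.ext hinit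
      have hlast := congrArg endT hxy
      rw [endT_ext_inl, endT_ext_inr, hT] at hlast
      rcases up_ne_dn (pf_endT y.1.1) (i := x.1.2) (j := y.1.2) (g := endT y.1.1) with h | h
      · exact h hlast
      · exact h rfl
    · exfalso
      have hinit := congrArg Fin.init (congrArg Subtype.val hxy)
      rw [init_ext_inr x, init_ext_inl y] at hinit
      have hT : x.1.1 = y.1.1 := Subtype.ext hinit
      have hlast := congrArg endT hxy
      rw [endT_ext_inr, endT_ext_inl, hT] at hlast
      rcases up_ne_dn (pf_endT y.1.1) (i := y.1.2) (j := x.1.2) (g := endT y.1.1) with h | h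
      · exact h hlast.symm
      · exact h rfl
    · have hinit := congrArg Fin.init (congrArg Subtype.val hxy)
      rw [init_ext_inr x, init_ext_inr y] at hinit
      have hT : x.1.1 = y.1.1 := Subtype.ext hinit
      have hlast := congrArg endT hxy
      rw [endT_ext_inr, endT_ext_inr, hT] at hlast
      have : x.1.2 = y.1.2 := dn_eq_dn_iff (hT ▸ x.2) y.2 hlast
      congr 1
      exact Subtype.ext (Prod.ext (by rw [hT]) this)
  · intro T
    set T' : OT n := ⟨Fin.init T.1, isOscTab_init T⟩ with hT'
    have hps : IsPartFun (endT T') := pf_endT T'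
    rcases last_step T with h | h
    · obtain ⟨i, hi, hup⟩ := (addBox_up_iff hps).1 ⟨h, pf_endT T⟩
      refine ⟨Sum.inl ⟨(T', i), hi⟩, ?_⟩
      apply Subtype.ext
      show Fin.snoc T'.1 (up (endT T') i) = T.1
      rw [← hup]
      exact Fin.snoc_init_self T.1
    · obtain ⟨i, hi, hdn⟩ := (addBox_dn_iff hps).1 ⟨h, pf_endT T⟩
      refine ⟨Sum.inr ⟨(T', i), hi⟩, ?_⟩
      apply Subtype.ext
      show Fin.snoc T'.1 (dn (endT T') i) = T.1
      rw [← hdn]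
      exact Fin.snoc_init_self T.1

-- ## Stage 4: the key bijection (Claim A) and counting

noncomputable def master (n : ℕ) : AddG n ⊕ RemG n ≃ OT (n+1) :=
  Equiv.ofBijective (ext n) (ext_bijective n)

lemma endT_master_inl {n : ℕ} (x : AddG n) :
    endT (master n (Sum.inl x)) = up (endT x.1.1) x.1.2 := endT_ext_inl x

lemma endT_master_inr {n : ℕ} (x : RemG n) :
    endT (master n (Sum.inr x)) = dn (endT x.1.1) x.1.2 := endT_ext_inr x

-- helper equivalences
def prodSigma {α β : Type} {P : α → β → Prop} :
    {p : α × β // P p.1 p.2} ≃ Σ a : α, {b : β // P a b} where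
  toFun x := ⟨x.1.1, x.1.2, x.2⟩
  invFun y := ⟨(y.1, y.2.1), y.2.2⟩
  left_inv x := rfl
  right_inv y := rfl

def graphEquiv {α S : Type} (f : α → S) (G : S → Type) :
    (Σ x : α, G (f x)) ≃ Σ s : S, ({x : α // f x = s} × G s) where
  toFun z := ⟨f z.1, ⟨z.1, rfl⟩, z.2⟩
  invFun w := match w with
    | ⟨_, ⟨x, rfl⟩, g⟩ => ⟨x, g⟩
  left_inv z := rfl
  right_inv w := by rcases w with ⟨s, ⟨x, hx⟩, g⟩; subst hx; rfl

def shuffle {S : Type} (β : Type) (G H : S → Type) :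
    (Σ s, (β × G s) × H s) ≃ β × Σ s, G s × H s where
  toFun z := (z.2.1.1, ⟨z.1, z.2.1.2, z.2.2⟩)
  invFun w := ⟨w.2.1, (w.1, w.2.2.1), w.2.2.2⟩
  left_inv z := rfl
  right_inv w := rfl

def subtypeProdCongrLeft {α β γ : Type} (e : α ≃ β) (P : β → γ → Prop) :
    {p : β × γ // P p.1 p.2} ≃ {p : α × γ // P (e p.1) p.2} where
  toFun q := ⟨(e.symm q.1.1, q.1.2), by rw [Equiv.apply_symm_apply]; exact q.2⟩
  invFun q := ⟨(e q.1.1, q.1.2), q.2⟩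
  left_inv q := Subtype.ext (Prod.ext (e.apply_symm_apply _) rfl)
  right_inv q := Subtype.ext (Prod.ext (e.symm_apply_apply _) rfl)

def subtypeSumEquiv {A B : Type} {PA : A → Prop} {PB : B → Prop} :
    {y : A ⊕ B // Sum.elim PA PB y} ≃ {a // PA a} ⊕ {b // PB b} where
  toFun y := match y with
    | ⟨Sum.inl a, h⟩ => Sum.inl ⟨a, h⟩
    | ⟨Sum.inr b, h⟩ => Sum.inr ⟨b, h⟩
  invFun := Sum.elim (fun a => ⟨Sum.inl a.1, a.2⟩) (fun b => ⟨Sum.inr b.1, b.2⟩)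
  left_inv y := by rcases y with ⟨a | b, h⟩ <;> rfl
  right_inv y := by rcases y with ⟨a, h⟩ | ⟨b, h⟩ <;> rfl

def sigmaSumSplit {A B : Type} (F : A ⊕ B → Type) :
    (Σ y : A ⊕ B, F y) ≃ (Σ a, F (Sum.inl a)) ⊕ (Σ b, F (Sum.inr b)) where
  toFun z := match z with
    | ⟨Sum.inl a, g⟩ => Sum.inl ⟨a, g⟩
    | ⟨Sum.inr b, g⟩ => Sum.inr ⟨b, g⟩
  invFun := Sum.elim (fun z => ⟨Sum.inl z.1, z.2⟩) (fun z => ⟨Sum.inr z.1, z.2⟩)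
  left_inv z := by rcases z with ⟨a | b, g⟩ <;> rfl
  right_inv z := by rcases z with ⟨a, g⟩ | ⟨b, g⟩ <;> rfl

def sumShuffle {A B C : Type} : (A ⊕ B) ⊕ C ≃ (A ⊕ C) ⊕ B where
  toFun z := match z with
    | Sum.inl (Sum.inl a) => Sum.inl (Sum.inl a)
    | Sum.inl (Sum.inr b) => Sum.inr b
    | Sum.inr c => Sum.inl (Sum.inr c)
  invFun z := match z with
    | Sum.inl (Sum.inl a) => Sum.inl (Sum.inl a)
    | Sum.inl (Sum.inr c) => Sum.inr c
    | Sum.inr b => Sum.inl (Sum.inr b)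
  left_inv z := by rcases z with (a | b) | c <;> rfl
  right_inv z := by rcases z with (a | c) | b <;> rfl

def finSuccProd (n : ℕ) (X : Type) : (Fin n × X) ⊕ X ≃ Fin (n+1) × X where
  toFun z := match z with
    | Sum.inl (k, x) => (k.castSucc, x)
    | Sum.inr x => (Fin.last n, x)
  invFun w := if h : (w.1 : ℕ) < n then Sum.inl (⟨w.1, h⟩, w.2) else Sum.inr w.2
  left_inv z := by
    rcases z with ⟨k, x⟩ | x
    · have hlt : ((k.castSucc : Fin (n+1)) : ℕ) < n := k.isLt
      simp only [dif_pos hlt]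
      congr 1
    · have hn : ¬ ((Fin.last n : ℕ) < n) := by simp [Fin.last]
      simp only [dif_neg hn]
  right_inv w := by
    by_cases h : (w.1 : ℕ) < n
    · simp only [dif_pos h]
      have he : (⟨(w.1 : ℕ), h⟩ : Fin n).castSucc = w.1 := Fin.ext rfl
      show ((⟨(w.1 : ℕ), h⟩ : Fin n).castSucc, w.2) = w
      rw [he]
    · simp only [dif_neg h]
      have he : Fin.last n = w.1 := Fin.ext (by have := w.1.isLt; simp [Fin.last]; omega)
      show (Fin.last n, w.2) = w
      rw [he]

-- the basic families
def OTE (n : ℕ) (ν : ℕ → ℕ) : Type := {T : OT n // endT T = ν}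
def MK (n : ℕ) (ν : ℕ → ℕ) : Type := {q : RemG n // dn (endT q.1.1) q.1.2 = ν}
def ASide (n : ℕ) (ν : ℕ → ℕ) : Type := {q : AddG n // up (endT q.1.1) q.1.2 = ν}

/-- fibered decomposition of tableaux of length `n+1` with end shape `ν` by their last step -/
noncomputable def masterE (n : ℕ) (ν : ℕ → ℕ) : ASide n ν ⊕ MK n ν ≃ OTE (n+1) ν :=
  (subtypeSumEquiv (PA := fun x : AddG n => up (endT x.1.1) x.1.2 = ν)
    (PB := fun x : RemG n => dn (endT x.1.1) x.1.2 = ν)).symm.trans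
    (Equiv.subtypeEquiv (master n) (by
      rintro (x | x)
      · simp only [Sum.elim_inl, endT_master_inl]
      · simp only [Sum.elim_inr, endT_master_inr]))

def FibA (ν μ : ℕ → ℕ) : Type := {i : ℕ // Addable μ i ∧ up μ i = ν}
def FibR (ν μ : ℕ → ℕ) : Type := {i : ℕ // Removable μ i ∧ dn μ i = ν}

def regroupU {n : ℕ} {ν : ℕ → ℕ} :
    (Σ x : AddG n, {i : ℕ // Removable (up (endT x.1.1) x.1.2) i ∧
        dn (up (endT x.1.1) x.1.2) i = ν}) ≃ Σ T : OT n, UU (endT T) ν where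
  toFun z := ⟨z.1.1.1, ⟨(z.1.1.2, z.2.1), z.1.2, z.2.2⟩⟩
  invFun w := ⟨⟨(w.1, w.2.1.1), w.2.2.1⟩, ⟨w.2.1.2, w.2.2.2⟩⟩
  left_inv z := rfl
  right_inv w := rfl

def regroupD {n : ℕ} {ν : ℕ → ℕ} :
    (Σ T : OT n, DD (endT T) ν) ≃ Σ m : RemG n, FibA ν (dn (endT m.1.1) m.1.2) where
  toFun z := ⟨⟨(z.1, z.2.1.1), z.2.2.1⟩, ⟨z.2.1.2, z.2.2.2⟩⟩
  invFun w := ⟨w.1.1.1, ⟨(w.1.1.2, w.2.1), w.1.2, w.2.2⟩⟩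
  left_inv z := rfl
  right_inv w := rfl

def regroupA {m : ℕ} {ν : ℕ → ℕ} : (Σ T : OT m, FibA ν (endT T)) ≃ ASide m ν where
  toFun z := ⟨⟨(z.1, z.2.1), z.2.2.1⟩, z.2.2.2⟩
  invFun w := ⟨w.1.1.1, ⟨w.1.1.2, w.1.2, w.2⟩⟩
  left_inv z := rfl
  right_inv w := rfl

def regroupM {m : ℕ} {ν : ℕ → ℕ} : (Σ T : OT m, FibR ν (endT T)) ≃ MK m ν where
  toFun z := ⟨⟨(z.1, z.2.1), z.2.2.1⟩, z.2.2.2⟩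
  invFun w := ⟨w.1.1.1, ⟨w.1.1.2, w.1.2, w.2⟩⟩
  left_inv z := rfl
  right_inv w := rfl

def pliftFiberEquiv {n : ℕ} {ν : ℕ → ℕ} : (Σ T : OT n, PLift (endT T = ν)) ≃ OTE n ν where
  toFun z := ⟨z.1, z.2.down⟩
  invFun w := ⟨w.1, ⟨w.2⟩⟩
  left_inv z := rfl
  right_inv w := rfl

lemma endT_OT0 (T : OT 0) : endT T = fun _ => 0 := by
  show T.1 (Fin.last 0) = _
  have h : Fin.last 0 = 0 := rfl
  rw [h]
  exact T.2.2.1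

/-- Claim A: marked tableaux with resulting shape ν are `n` copies of
length-`(n-1)` tableaux ending at ν. -/
lemma claimA : ∀ n : ℕ, ∀ ν : ℕ → ℕ, Nonempty (MK n ν ≃ Fin n × OTE (n-1) ν) := by
  intro n
  induction n with
  | zero =>
    intro ν
    haveI : IsEmpty (MK 0 ν) := ⟨fun q => by
      have h0 : endT q.1.1.1 = (fun _ => 0) := endT_OT0 _
      have hr := q.1.2
      rw [h0] at hr
      exact absurd hr (by unfold Removable; simp)⟩
    exact ⟨Equiv.equivOfIsEmpty _ _⟩
  | succ n IH =>
    intro ν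
    have e : ∀ μ, MK n μ ≃ Fin n × OTE (n-1) μ := fun μ => Classical.choice (IH μ)
    refine ⟨?_⟩
    calc MK (n+1) ν
        ≃ {p : OT (n+1) × ℕ // Removable (endT p.1) p.2 ∧ dn (endT p.1) p.2 = ν} :=
          Equiv.subtypeSubtypeEquivSubtypeInter
            (fun p : OT (n+1) × ℕ => Removable (endT p.1) p.2)
            (fun p : OT (n+1) × ℕ => dn (endT p.1) p.2 = ν)
      _ ≃ {p : (AddG n ⊕ RemG n) × ℕ //
            Removable (endT (master n p.1)) p.2 ∧ dn (endT (master n p.1)) p.2 = ν} :=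
          subtypeProdCongrLeft (master n)
            (fun (T : OT (n+1)) (i : ℕ) => Removable (endT T) i ∧ dn (endT T) i = ν)
      _ ≃ Σ y : AddG n ⊕ RemG n,
            {i : ℕ // Removable (endT (master n y)) i ∧ dn (endT (master n y)) i = ν} :=
          prodSigma (P := fun (y : AddG n ⊕ RemG n) (i : ℕ) =>
            Removable (endT (master n y)) i ∧ dn (endT (master n y)) i = ν)
      _ ≃ (Σ x : AddG n, {i : ℕ // Removable (endT (master n (Sum.inl x))) i ∧
              dn (endT (master n (Sum.inl x))) i = ν}) ⊕
          (Σ x : RemG n, {i : ℕ // Removable (endT (master n (Sum.inr x))) i ∧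
              dn (endT (master n (Sum.inr x))) i = ν}) := sigmaSumSplit _
      _ ≃ (Σ T : OT n, UU (endT T) ν) ⊕ (Σ m : RemG n, FibR ν (dn (endT m.1.1) m.1.2)) := by
          refine Equiv.sumCongr ?_ ?_
          · exact (Equiv.sigmaCongrRight (fun x => Equiv.subtypeEquiv (Equiv.refl ℕ)
              (fun i => by simp only [endT_master_inl, Equiv.refl_apply]))).trans regroupU
          · exact Equiv.sigmaCongrRight (fun x => Equiv.subtypeEquiv (Equiv.refl ℕ)
              (fun i => by simp only [endT_master_inr, Equiv.refl_apply]))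
      _ ≃ ((Σ T : OT n, DD (endT T) ν) ⊕ (Σ T : OT n, PLift (endT T = ν))) ⊕
          (Σ m : RemG n, FibR ν (dn (endT m.1.1) m.1.2)) :=
          Equiv.sumCongr ((Equiv.sigmaCongrRight (fun T => dp (pf_endT T) ν)).trans
            (Equiv.sigmaSumDistrib _ _)) (Equiv.refl _)
      _ ≃ ((Σ T : OT n, DD (endT T) ν) ⊕ (Σ m : RemG n, FibR ν (dn (endT m.1.1) m.1.2))) ⊕
          OTE n ν :=
          sumShuffle.trans (Equiv.sumCongr (Equiv.refl _) pliftFiberEquiv)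
      _ ≃ ((Fin n × ASide (n-1) ν) ⊕ (Fin n × MK (n-1) ν)) ⊕ OTE n ν := by
          refine Equiv.sumCongr (Equiv.sumCongr ?_ ?_) (Equiv.refl _)
          · exact regroupD.trans
              ((graphEquiv (fun m : RemG n => dn (endT m.1.1) m.1.2) (FibA ν)).trans
               ((Equiv.sigmaCongrRight (fun μ => Equiv.prodCongr (e μ) (Equiv.refl _))).trans
                ((shuffle (Fin n) (OTE (n-1)) (FibA ν)).trans
                  (Equiv.prodCongr (Equiv.refl _)
                    ((graphEquiv (endT (n := n-1)) (FibA ν)).symm.trans regroupA)))))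
          · exact (graphEquiv (fun m : RemG n => dn (endT m.1.1) m.1.2) (FibR ν)).trans
               ((Equiv.sigmaCongrRight (fun μ => Equiv.prodCongr (e μ) (Equiv.refl _))).trans
                ((shuffle (Fin n) (OTE (n-1)) (FibR ν)).trans
                  (Equiv.prodCongr (Equiv.refl _)
                    ((graphEquiv (endT (n := n-1)) (FibR ν)).symm.trans regroupM))))
      _ ≃ (Fin n × (ASide (n-1) ν ⊕ MK (n-1) ν)) ⊕ OTE n ν :=
          Equiv.sumCongr (Equiv.prodSumDistrib _ _ _).symm (Equiv.refl _)
      _ ≃ (Fin n × OTE n ν) ⊕ OTE n ν := by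
          refine Equiv.sumCongr ?_ (Equiv.refl _)
          match n with
          | 0 => exact Equiv.equivOfIsEmpty _ _
          | m+1 => exact Equiv.prodCongr (Equiv.refl _) (masterE m ν)
      _ ≃ Fin (n+1) × OTE n ν := finSuccProd n _

-- ## Stage 5: finiteness and the counting recurrence

def sigmaProdComm {S : Type} (β : Type) (G : S → Type) :
    (Σ s : S, β × G s) ≃ β × Σ s : S, G s where
  toFun z := (z.2.1, ⟨z.1, z.2.2⟩)
  invFun w := ⟨w.2.1, w.1, w.2.2⟩
  left_inv z := rfl
  right_inv w := rfl

def T0 : OT 0 :=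
  ⟨fun _ _ => 0, fun _ => ⟨fun _ _ _ => le_refl 0, 0, fun _ _ => rfl⟩, rfl, fun k => k.elim0⟩

instance : Unique (OT 0) where
  default := T0
  uniq T := by
    apply Subtype.ext
    funext k
    have hk : k = 0 := Subsingleton.elim (α := Fin 1) k 0
    rw [hk, T.2.2.1]
    rfl

lemma finite_AddG (n : ℕ) [Finite (OT n)] : Finite (AddG n) := by
  haveI : ∀ T : OT n, Finite {i // Addable (endT T) i} := fun T => finite_addable (pf_endT T)
  exact Finite.of_equiv _ (prodSigma (P := fun (T : OT n) (i : ℕ) => Addable (endT T) i)).symm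

lemma finite_RemG (n : ℕ) [Finite (OT n)] : Finite (RemG n) := by
  haveI : ∀ T : OT n, Finite {i // Removable (endT T) i} := fun T => finite_removable (pf_endT T)
  exact Finite.of_equiv _ (prodSigma (P := fun (T : OT n) (i : ℕ) => Removable (endT T) i)).symm

instance finite_OT : ∀ n, Finite (OT n)
  | 0 => Finite.of_equiv PUnit (Equiv.equivPUnit (OT 0)).symm
  | (n+1) => by
      haveI := finite_OT n
      haveI := finite_AddG n
      haveI := finite_RemG n
      exact Finite.of_equiv _ (master n)

lemma card_OT0 : Nat.card (OT 0) = 1 := Nat.card_unique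

lemma card_RemG (n : ℕ) : Nat.card (RemG n) = n * Nat.card (OT (n-1)) := by
  have e1 : RemG n ≃ Fin n × OT (n-1) :=
    (Equiv.sigmaFiberEquiv (fun m : RemG n => dn (endT m.1.1) m.1.2)).symm.trans
      ((Equiv.sigmaCongrRight (fun μ => Classical.choice (claimA n μ))).trans
        ((sigmaProdComm (Fin n) (OTE (n-1))).trans
          (Equiv.prodCongr (Equiv.refl _) (Equiv.sigmaFiberEquiv (endT (n := n-1))))))
  rw [Nat.card_congr e1, Nat.card_prod]
  simp

def optionSumUnit {β : Type} : Option β ≃ β ⊕ Unit where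
  toFun x := match x with | none => Sum.inr () | some b => Sum.inl b
  invFun y := match y with | Sum.inr _ => none | Sum.inl b => some b
  left_inv x := by cases x <;> rfl
  right_inv y := by rcases y with b | u <;> rfl

def sigmaUnit {α : Type} : (Σ _ : α, Unit) ≃ α :=
  ⟨fun z => z.1, fun a => ⟨a, ()⟩, fun _ => rfl, fun _ => rfl⟩

lemma card_AddG (n : ℕ) : Nat.card (AddG n) = Nat.card (RemG n) + Nat.card (OT n) := by
  have e1 : AddG n ≃ RemG n ⊕ OT n :=
    (prodSigma (P := fun (T : OT n) (i : ℕ) => Addable (endT T) i)).trans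
      ((Equiv.sigmaCongrRight (fun T =>
          (addableEquiv (l := endT T)).trans optionSumUnit)).trans
        ((Equiv.sigmaSumDistrib _ _).trans
          (Equiv.sumCongr
            (prodSigma (P := fun (T : OT n) (i : ℕ) => Removable (endT T) i)).symm
            sigmaUnit)))
  haveI := finite_RemG n
  rw [Nat.card_congr e1, Nat.card_sum]

lemma card_rec (n : ℕ) :
    Nat.card (OT (n+1)) = Nat.card (OT n) + 2 * (n * Nat.card (OT (n-1))) := by
  haveI := finite_AddG n
  haveI := finite_RemG n
  have h1 : Nat.card (OT (n+1)) = Nat.card (AddG n) + Nat.card (RemG n) := by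
    rw [← Nat.card_congr (master n), Nat.card_sum]
  rw [h1, card_AddG n, card_RemG n]
  ring

end

end Osc

/-- The formal power series `exp(t + t²)` over `ℚ`; its `n`-th coefficient is
`Σ_{a + 2b = n} 1/(a! b!)`. -/
noncomputable def expXplusX2 : PowerSeries ℚ :=
  PowerSeries.mk fun n =>
    ∑ b ∈ Finset.range (n + 1),
      if 2 * b ≤ n then (1 : ℚ) / ((n - 2 * b).factorial * b.factorial) else 0

namespace OscCoeff

noncomputable def c (m : ℕ) : ℚ := PowerSeries.coeff m expXplusX2

noncomputable def tq (m b : ℕ) : ℚ :=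
  if 2 * b ≤ m then (1 : ℚ) / ((m - 2 * b).factorial * b.factorial) else 0

lemma c_eq (m : ℕ) : c m = ∑ b ∈ Finset.range (m + 1), tq m b := by
  unfold c expXplusX2 tq
  rw [PowerSeries.coeff_mk]

lemma c0 : c 0 = 1 := by
  rw [c_eq, Finset.sum_range_one]
  norm_num [tq, Nat.factorial]

lemma c1 : c 1 = 1 := by
  rw [c_eq, Finset.sum_range_succ, Finset.sum_range_one]
  norm_num [tq, Nat.factorial]

lemma termwise (n b : ℕ) :
    ((n : ℚ) + 2) * tq (n+2) b = tq (n+1) b + 2 * (if b = 0 then 0 else tq n (b-1)) := by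
  rcases b with _ | b'
  · simp only [tq, Nat.mul_zero, Nat.zero_le, if_pos, Nat.sub_zero, if_true]
    have h : ((n+2).factorial : ℚ) = ((n : ℚ) + 2) * (n+1).factorial := by
      rw [Nat.factorial_succ]
      push_cast
      ring
    have h1 : ((n+1).factorial : ℚ) ≠ 0 := Nat.cast_ne_zero.mpr (Nat.factorial_ne_zero _)
    have h2 : ((n:ℚ)+2) ≠ 0 := by positivity
    rw [h, Nat.factorial_zero]
    field_simp
    simp
  · rw [if_neg (Nat.succ_ne_zero b'), Nat.succ_sub_one]
    by_cases h2 : 2*(b'+1) ≤ n+1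
    · unfold tq
      rw [if_pos (by omega), if_pos h2, if_pos (by omega : 2*b' ≤ n)]
      have hk1 : n + 2 - 2*(b'+1) = (n+1-2*(b'+1)) + 1 := by omega
      have hk2 : n - 2*b' = (n+1-2*(b'+1)) + 1 := by omega
      set k := n+1-2*(b'+1) with hk
      rw [hk1, hk2, Nat.factorial_succ k, Nat.factorial_succ b']
      have hn : ((n : ℚ)+2) = ((k:ℚ)+1) + 2*((b':ℚ)+1) := by
        have hh : n + 2 = (k+1) + 2*(b'+1) := by omega
        exact_mod_cast congrArg (fun m : ℕ => (m : ℚ)) hh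
      have z1 : ((k.factorial : ℚ)) ≠ 0 := Nat.cast_ne_zero.mpr (Nat.factorial_ne_zero _)
      have z2 : ((b'.factorial : ℚ)) ≠ 0 := Nat.cast_ne_zero.mpr (Nat.factorial_ne_zero _)
      rw [hn]
      push_cast
      field_simp
    · by_cases h3 : 2*(b'+1) = n+2
      · unfold tq
        rw [if_pos (by omega), if_neg h2, if_pos (by omega : 2*b' ≤ n)]
        have hk1 : n + 2 - 2*(b'+1) = 0 := by omega
        have hk2 : n - 2*b' = 0 := by omega
        rw [hk1, hk2, Nat.factorial_zero, Nat.factorial_succ b']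
        have hn : ((n : ℚ)+2) = 2*((b':ℚ)+1) := by
          have hh : n + 2 = 2*(b'+1) := by omega
          exact_mod_cast congrArg (fun m : ℕ => (m : ℚ)) hh
        have z2 : ((b'.factorial : ℚ)) ≠ 0 := Nat.cast_ne_zero.mpr (Nat.factorial_ne_zero _)
        rw [hn]
        push_cast
        field_simp
        ring
      · unfold tq
        rw [if_neg (by omega), if_neg h2, if_neg (by omega : ¬ 2*b' ≤ n)]
        simp

lemma crec (n : ℕ) : ((n : ℚ) + 2) * c (n+2) = c (n+1) + 2 * c n := by
  rw [c_eq (n+2), Finset.mul_sum]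
  rw [Finset.sum_congr rfl (fun b _ => termwise n b)]
  rw [Finset.sum_add_distrib]
  have h1 : ∑ b ∈ Finset.range (n+2+1), tq (n+1) b = c (n+1) := by
    rw [Finset.sum_range_succ, c_eq (n+1)]
    have : tq (n+1) (n+2) = 0 := by unfold tq; rw [if_neg (by omega)]
    rw [this, add_zero]
  have h2 : ∑ b ∈ Finset.range (n+2+1), (2 : ℚ) * (if b = 0 then 0 else tq n (b-1)) = 2 * c n := by
    rw [← Finset.mul_sum]
    congr 1
    rw [Finset.sum_range_succ' (fun b => if b = 0 then 0 else tq n (b-1)) (n+2)]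
    have e1 : ∀ x : ℕ, (if x + 1 = 0 then (0:ℚ) else tq n (x+1-1)) = tq n x := fun x => by
      rw [if_neg (Nat.succ_ne_zero x), Nat.succ_sub_one]
    rw [Finset.sum_congr rfl (fun x _ => e1 x), if_pos rfl, add_zero,
      Finset.sum_range_succ, c_eq n]
    have hz : tq n (n+1) = 0 := by unfold tq; rw [if_neg (by omega)]
    rw [hz, add_zero]
  rw [h1, h2]

end OscCoeff

/-- The total number of oscillating tableaux of length `n` and arbitrary shape,
`Σ_μ f̃^μ_n`, equals `n!` times the coefficient of `t^n` in `exp(t + t²)`. -/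
theorem total_osc_tableaux (n : ℕ) :
    ((Nat.card {T : Fin (n + 1) → ℕ → ℕ // IsOscTab n T}) : ℚ) =
      n.factorial * PowerSeries.coeff n expXplusX2 := by
  
  have key : ∀ m : ℕ,
      ((Nat.card (Osc.OT m) : ℚ) = m.factorial * OscCoeff.c m) ∧
      ((Nat.card (Osc.OT (m+1)) : ℚ) = (m+1).factorial * OscCoeff.c (m+1)) := by
    intro m
    induction m with
    | zero =>
      constructor
      · rw [Osc.card_OT0, OscCoeff.c0]
        norm_num
      · have h := Osc.card_rec 0
        rw [Osc.card_OT0] at h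
        norm_num at h
        rw [h, OscCoeff.c1]
        norm_num
    | succ m ih =>
      refine ⟨ih.2, ?_⟩
      have h := Osc.card_rec (m+1)
      have hcast : ((Nat.card (Osc.OT (m+2)) : ℚ)) =
          (Nat.card (Osc.OT (m+1)) : ℚ) + 2 * ((m+1) * (Nat.card (Osc.OT m) : ℚ)) := by
        rw [h]
        push_cast
        ring
      rw [hcast, ih.1, ih.2]
      have hfac : ((m+2).factorial : ℚ) = ((m:ℚ)+2) * (m+1).factorial := by
        rw [Nat.factorial_succ]
        push_cast
        ring
      have hfac2 : ((m+1).factorial : ℚ) = ((m:ℚ)+1) * m.factorial := by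
        rw [Nat.factorial_succ]
        push_cast
        ring
      have hc := OscCoeff.crec m
      calc ((m+1).factorial : ℚ) * OscCoeff.c (m+1) + 2 * ((m+1) * (m.factorial * OscCoeff.c m))
          = ((m+1).factorial : ℚ) * (OscCoeff.c (m+1) + 2 * OscCoeff.c m) := by
            rw [hfac2]; ring
        _ = ((m+1).factorial : ℚ) * (((m:ℚ)+2) * OscCoeff.c (m+2)) := by rw [← hc]
        _ = ((m+2).factorial : ℚ) * OscCoeff.c (m+2) := by rw [hfac]; ring
  exact (key n).1
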